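/- Let G be a group satisfying conditions (M) and (NM). Let H be a nontrivial finite subgroup of G, let M be a nontrivial maximal finite subgroup of G, and let g, k ∈ G be elements with g⁻¹Hg ≤ M and k⁻¹Hk ≤ M. Then gM = kM, i.e. k⁻¹g ∈ M. Consequently, for every nontrivial finite subgroup H and every nontrivial maximal finite subgroup M of G, the set of H-fixed points of the left G-set G/M contains at most one coset. -/

import Mathlib

/-- A subgroup `M` of `G` is a maximal finite subgroup if it is finite and not properly
contained in any finite subgroup of `G`. -/
def IsMaxFiniteSubgroup {G : Type*} [Group G] (M : Subgroup G) : Prop :=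
  (M : Set G).Finite ∧ ∀ N : Subgroup G, (N : Set G).Finite → M ≤ N → M = N

lemma conj_isMaxFiniteSubgroup {G : Type*} [Group G] {M : Subgroup G}
    (hM : IsMaxFiniteSubgroup M) (g : G) :
    IsMaxFiniteSubgroup (M.map (MulAut.conj g).toMonoidHom) := by
  constructor
  · rw [Subgroup.coe_map]
    exact hM.1.image _
  · intro N hNfin hle
    have h1 : M ≤ N.map (MulAut.conj g⁻¹).toMonoidHom := by
      intro m hm
      refine ⟨g * m * g⁻¹, hle ⟨m, hm, rfl⟩, ?_⟩
      simp [MulAut.conj_apply, mul_assoc]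
    have h2 : M = N.map (MulAut.conj g⁻¹).toMonoidHom := by
      apply hM.2 _ _ h1
      rw [Subgroup.coe_map]
      exact hNfin.image _
    apply le_antisymm hle
    intro n hn
    have : g⁻¹ * n * g ∈ M := by
      rw [h2]
      exact ⟨n, hn, by simp [MulAut.conj_apply, mul_assoc]⟩
    exact ⟨g⁻¹ * n * g, this, by simp [MulAut.conj_apply]; group⟩

theorem fixed_points_of_quotient_by_maximal_finite_subsingleton
    {G : Type*} [Group G]
    (condM : ∀ H : Subgroup G, H ≠ ⊥ → (H : Set G).Finite →
      ∃! M : Subgroup G, IsMaxFiniteSubgroup M ∧ H ≤ M)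
    (condNM : ∀ M : Subgroup G, IsMaxFiniteSubgroup M → M ≠ ⊥ → Subgroup.normalizer (M : Set G) = M)
    (H M : Subgroup G) (hH : H ≠ ⊥) (hHfin : (H : Set G).Finite)
    (hM : IsMaxFiniteSubgroup M) (hMnt : M ≠ ⊥) :
    (∀ g k : G, (∀ h ∈ H, g⁻¹ * h * g ∈ M) → (∀ h ∈ H, k⁻¹ * h * k ∈ M) →
      k⁻¹ * g ∈ M) ∧
    Set.Subsingleton {x : G ⧸ M | ∀ h ∈ H, h • x = x} := by
  have key : ∀ g k : G, (∀ h ∈ H, g⁻¹ * h * g ∈ M) → (∀ h ∈ H, k⁻¹ * h * k ∈ M) →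
      k⁻¹ * g ∈ M := by
    intro g k hg hk
    obtain ⟨L, _, hLuniq⟩ := condM H hH hHfin
    have hsub : ∀ x : G, (∀ h ∈ H, x⁻¹ * h * x ∈ M) →
        H ≤ M.map (MulAut.conj x).toMonoidHom := by
      intro x hx h hh
      exact ⟨x⁻¹ * h * x, hx h hh, by simp [MulAut.conj_apply]; group⟩
    have eg : M.map (MulAut.conj g).toMonoidHom = L :=
      hLuniq _ ⟨conj_isMaxFiniteSubgroup hM g, hsub g hg⟩
    have ek : M.map (MulAut.conj k).toMonoidHom = L :=
      hLuniq _ ⟨conj_isMaxFiniteSubgroup hM k, hsub k hk⟩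
    have heq : M.map (MulAut.conj g).toMonoidHom = M.map (MulAut.conj k).toMonoidHom :=
      eg.trans ek.symm
    set n := k⁻¹ * g with hn
    have E : M.map (MulAut.conj n).toMonoidHom = M := by
      ext x
      constructor
      · rintro ⟨m, hm, rfl⟩
        have : g * m * g⁻¹ ∈ M.map (MulAut.conj k).toMonoidHom := by
          rw [← heq]
          exact ⟨m, hm, by simp [MulAut.conj_apply, mul_assoc]⟩
        obtain ⟨m', hm', hm'eq⟩ := this
        simp only [MulEquiv.coe_toMonoidHom, MulAut.conj_apply] at hm'eq ⊢
        have h3 : m' = k⁻¹ * (g * m * g⁻¹) * k := by rw [← hm'eq]; group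
        have : n * m * n⁻¹ = m' := by rw [h3, hn]; group
        rw [this]; exact hm'
      · intro hx
        have : k * x * k⁻¹ ∈ M.map (MulAut.conj k).toMonoidHom :=
          ⟨x, hx, by simp [MulAut.conj_apply]⟩
        rw [← heq] at this
        obtain ⟨m, hm, hmeq⟩ := this
        simp only [MulEquiv.coe_toMonoidHom, MulAut.conj_apply] at hmeq
        refine ⟨m, hm, ?_⟩
        simp only [MulEquiv.coe_toMonoidHom, MulAut.conj_apply]
        have := congrArg (fun z => k⁻¹ * z * k) hmeq
        rw [hn]
        calc k⁻¹ * g * m * (k⁻¹ * g)⁻¹ = k⁻¹ * (g * m * g⁻¹) * k := by group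
      _ = k⁻¹ * (k * x * k⁻¹) * k := by rw [this]
      _ = x := by group
    have hnorm : n ∈ Subgroup.normalizer (M : Set G) := by
      rw [Subgroup.mem_normalizer_iff]
      intro h
      constructor
      · intro hh
        rw [← E]
        exact ⟨h, hh, by simp [MulAut.conj_apply, mul_assoc]⟩
      · intro hh
        rw [← E] at hh
        obtain ⟨m, hm, hmeq⟩ := hh
        simp only [MulEquiv.coe_toMonoidHom, MulAut.conj_apply] at hmeq
        have : m = h := mul_left_cancel (mul_right_cancel hmeq)
        rwa [← this]
    rwa [condNM M hM hMnt] at hnorm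
  refine ⟨key, ?_⟩
  intro x hx y hy
  obtain ⟨g, rfl⟩ := QuotientGroup.mk_surjective x
  obtain ⟨k, rfl⟩ := QuotientGroup.mk_surjective y
  have conj_mem : ∀ z : G, (∀ h ∈ H, h • (QuotientGroup.mk z : G ⧸ M) = QuotientGroup.mk z) →
      ∀ h ∈ H, z⁻¹ * h * z ∈ M := by
    intro z hz h hh
    have h1 := hz h⁻¹ (H.inv_mem hh)
    have h2 : (QuotientGroup.mk (h⁻¹ * z) : G ⧸ M) = QuotientGroup.mk z := h1
    rw [QuotientGroup.eq] at h2
    convert h2 using 1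
    group
  have := key g k (conj_mem g hx) (conj_mem k hy)
  exact (QuotientGroup.eq.mpr this).symm
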